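/- arXiv:1201.6649 — 2 statements merged into one kernel-verified Lean document; each statement's English description precedes it below -/
import Mathlib

section
/- Let B = {b_1, ..., b_{N+1}} be a multiset of vectors in Z^2 whose sum is zero. For a vector v in R^2 not parallel to any b_i, define d_{B,v} to be the sum of |det(b_i, b_j)| over all pairs i < j such that v lies in the cone generated by b_i and b_j. Then d_{B,v} is independent of the choice of v: for any two such vectors v and v', d_{B,v} = d_{B,v'}. -/
open scoped Classical

noncomputable section

/-- Coerce an integer vector in `ℤ × ℤ` to `ℝ × ℝ`. -/
def toR (x : ℤ × ℤ) : ℝ × ℝ := ((x.1 : ℝ), (x.2 : ℝ))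

/-- The determinant of the 2×2 matrix with columns `x` and `y`. -/
def det2 (x y : ℝ × ℝ) : ℝ := x.1 * y.2 - x.2 * y.1

/-- `v` lies in the cone generated by `x` and `y`. -/
def inCone (x y v : ℝ × ℝ) : Prop := ∃ s t : ℝ, 0 ≤ s ∧ 0 ≤ t ∧ v = s • x + t • y

/-- `d_{B,v}`: the sum of `|det(b_i,b_j)|` over pairs `i < j` whose cone contains `v`. -/
def dSum (N : ℕ) (b : Fin (N + 1) → ℤ × ℤ) (v : ℝ × ℝ) : ℝ :=
  ∑ p : Fin (N + 1) × Fin (N + 1),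
    if p.1 < p.2 ∧ inCone (toR (b p.1)) (toR (b p.2)) v
    then |det2 (toR (b p.1)) (toR (b p.2))| else 0

namespace DSumInv

def sgn' (x : ℝ) : ℝ := if 0 ≤ x then 1 else -1

lemma sgn'_pos {x : ℝ} (h : 0 < x) : sgn' x = 1 := if_pos h.le
lemma sgn'_neg {x : ℝ} (h : x < 0) : sgn' x = -1 := if_neg (not_le.2 h)
lemma sgn'_cases (x : ℝ) : sgn' x = 1 ∨ sgn' x = -1 := by
  unfold sgn'; split <;> simp

lemma det2_swap (x y : ℝ × ℝ) : det2 y x = - det2 x y := by unfold det2; ring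
lemma det2_self (x : ℝ × ℝ) : det2 x x = 0 := by unfold det2; ring
lemma det2_zero_left (y : ℝ × ℝ) : det2 0 y = 0 := by unfold det2; simp
lemma det2_zero_right (x : ℝ × ℝ) : det2 x 0 = 0 := by unfold det2; simp

lemma exists_smul (x v : ℝ × ℝ) (hx : x ≠ 0) (h : det2 x v = 0) : ∃ t : ℝ, v = t • x := by
  have hx' : x.1 ≠ 0 ∨ x.2 ≠ 0 := by
    by_contra hc; push_neg at hc; exact hx (Prod.ext_iff.mpr ⟨hc.1, hc.2⟩)
  unfold det2 at h
  rcases hx' with h1 | h2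
  · refine ⟨v.1 / x.1, Prod.ext_iff.mpr ⟨?_, ?_⟩⟩
    · simp only [Prod.smul_fst, smul_eq_mul]; field_simp
    · simp only [Prod.smul_snd, smul_eq_mul]; field_simp; linarith
  · refine ⟨v.2 / x.2, Prod.ext_iff.mpr ⟨?_, ?_⟩⟩
    · simp only [Prod.smul_fst, smul_eq_mul]; field_simp; linarith
    · simp only [Prod.smul_snd, smul_eq_mul]; field_simp

lemma det2_ne_zero {x v : ℝ × ℝ} (hx : x ≠ 0) (hv : ∀ t : ℝ, v ≠ t • x) : det2 x v ≠ 0 :=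
  fun h => by obtain ⟨t, ht⟩ := exists_smul x v hx h; exact hv t ht

lemma abs_eq_pos_case {d V : ℝ} (h : 0 < d * V) : |d| = sgn' V * d := by
  rcases lt_trichotomy d 0 with hd | hd | hd
  · have hV : V < 0 := by nlinarith
    rw [abs_of_neg hd, sgn'_neg hV]; ring
  · rw [hd, zero_mul] at h; exact absurd h (lt_irrefl 0)
  · have hV : 0 < V := by nlinarith
    rw [abs_of_pos hd, sgn'_pos hV]; ring

lemma abs_eq_neg_case {d V : ℝ} (h : d * V < 0) : |d| = -(sgn' V * d) := by
  rcases lt_trichotomy d 0 with hd | hd | hd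
  · have hV : 0 < V := by nlinarith
    rw [abs_of_neg hd, sgn'_pos hV]; ring
  · rw [hd, zero_mul] at h; exact absurd h (lt_irrefl 0)
  · have hV : V < 0 := by nlinarith
    rw [abs_of_pos hd, sgn'_neg hV]; ring

lemma core (d V A A' B B' : ℝ) (hP : d * V = A * B' - A' * B)
    (hAA' : 0 < A * A') (hBB' : B * B' < 0) :
    sgn' A * sgn' B * |d| = -(sgn' V * d) := by
  have hkey : 0 < d * V * (A * B') := by
    have h1 : d * V * (A * B') = (A * B') ^ 2 - (A * A') * (B * B') := by
      linear_combination (A * B') * hP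
    nlinarith [sq_nonneg (A * B'), mul_neg_of_pos_of_neg hAA' hBB']
  have hA : A ≠ 0 := by rintro rfl; rw [zero_mul] at hAA'; exact lt_irrefl 0 hAA'
  have hB : B ≠ 0 := by rintro rfl; rw [zero_mul] at hBB'; exact lt_irrefl 0 hBB'
  rcases lt_or_gt_of_ne hA with hA1 | hA1 <;> rcases lt_or_gt_of_ne hB with hB1 | hB1
  · -- A<0, B<0 : B'>0, A*B'<0, d*V<0
    have hB' : 0 < B' := by nlinarith
    have hdv : d * V < 0 := by nlinarith [mul_neg_of_neg_of_pos hA1 hB']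
    rw [sgn'_neg hA1, sgn'_neg hB1, abs_eq_neg_case hdv]; ring
  · -- A<0, B>0 : B'<0, A*B'>0, d*V>0
    have hB' : B' < 0 := by nlinarith
    have hdv : 0 < d * V := by nlinarith [mul_pos_of_neg_of_neg hA1 hB']
    rw [sgn'_neg hA1, sgn'_pos hB1, abs_eq_pos_case hdv]; ring
  · -- A>0, B<0 : B'>0, A*B'>0, d*V>0
    have hB' : 0 < B' := by nlinarith
    have hdv : 0 < d * V := by nlinarith [mul_pos hA1 hB']
    rw [sgn'_pos hA1, sgn'_neg hB1, abs_eq_pos_case hdv]; ring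
  · -- A>0, B>0 : B'<0, A*B'<0, d*V<0
    have hB' : B' < 0 := by nlinarith
    have hdv : d * V < 0 := by nlinarith [mul_neg_of_pos_of_neg hA1 hB']
    rw [sgn'_pos hA1, sgn'_pos hB1, abs_eq_neg_case hdv]; ring

lemma mul_pos_of_sgn'_eq {a b : ℝ} (ha : a ≠ 0) (hb : b ≠ 0) (h : sgn' a = sgn' b) :
    0 < a * b := by
  rcases lt_or_gt_of_ne ha with h1 | h1 <;> rcases lt_or_gt_of_ne hb with h2 | h2
  · exact mul_pos_of_neg_of_neg h1 h2
  · rw [sgn'_neg h1, sgn'_pos h2] at h; norm_num at h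
  · rw [sgn'_pos h1, sgn'_neg h2] at h; norm_num at h
  · exact mul_pos h1 h2

lemma mul_neg_of_sgn'_ne {a b : ℝ} (ha : a ≠ 0) (hb : b ≠ 0) (h : sgn' a ≠ sgn' b) :
    a * b < 0 := by
  rcases lt_or_gt_of_ne ha with h1 | h1 <;> rcases lt_or_gt_of_ne hb with h2 | h2
  · rw [sgn'_neg h1, sgn'_neg h2] at h; norm_num at h
  · exact mul_neg_of_neg_of_pos h1 h2
  · exact mul_neg_of_pos_of_neg h1 h2
  · rw [sgn'_pos h1, sgn'_pos h2] at h; norm_num at h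

lemma sgn'_of_ne {a b : ℝ} (h : sgn' a ≠ sgn' b) : sgn' a = -sgn' b := by
  rcases sgn'_cases a with h1 | h1 <;> rcases sgn'_cases b with h2 | h2 <;>
    rw [h1, h2] at h ⊢ <;> (try exact absurd rfl h) <;> norm_num at h ⊢
lemma cone_formula (x y v : ℝ × ℝ) (hx : ∀ t : ℝ, v ≠ t • x) (hy : ∀ t : ℝ, v ≠ t • y) :
    (if inCone x y v then |det2 x y| else 0)
      = (1/4) * (|det2 x y| + (sgn' (det2 x v) - sgn' (det2 y v)) * det2 x y
          - sgn' (det2 x v) * sgn' (det2 y v) * |det2 x y|) := by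
  by_cases hd : det2 x y = 0
  · rw [hd]; simp
  have hd2 : x.1 * y.2 - x.2 * y.1 ≠ 0 := hd
  obtain ⟨s, t, hveq⟩ : ∃ s t : ℝ, v = s • x + t • y := by
    refine ⟨det2 v y / det2 x y, det2 x v / det2 x y, ?_⟩
    rw [Prod.ext_iff]
    constructor <;>
      simp only [Prod.fst_add, Prod.snd_add, Prod.smul_fst, Prod.smul_snd, smul_eq_mul, det2] <;>
      field_simp <;> (try ring_nf) <;>
      (have hd3 : y.2 * x.1 - y.1 * x.2 ≠ 0 := by intro h; apply hd2; linarith) <;>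
      field_simp <;> ring
  have hA : det2 x v = t * det2 x y := by
    rw [hveq]
    simp only [det2, Prod.fst_add, Prod.snd_add, Prod.smul_fst, Prod.smul_snd, smul_eq_mul]
    ring
  have hB : det2 y v = -(s * det2 x y) := by
    rw [hveq]
    simp only [det2, Prod.fst_add, Prod.snd_add, Prod.smul_fst, Prod.smul_snd, smul_eq_mul]
    ring
  have hs0 : s ≠ 0 := fun h => hy t (by rw [hveq, h, zero_smul, zero_add])
  have ht0 : t ≠ 0 := fun h => hx s (by rw [hveq, h, zero_smul, add_zero])
  have hcone : inCone x y v ↔ 0 ≤ s ∧ 0 ≤ t := by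
    constructor
    · rintro ⟨s', t', hs', ht', heq⟩
      have e : s' • x + t' • y = s • x + t • y := heq.symm.trans hveq
      have e1 : s' * x.1 + t' * y.1 = s * x.1 + t * y.1 := by
        have := congrArg Prod.fst e
        simpa [Prod.fst_add, Prod.smul_fst, smul_eq_mul] using this
      have e2 : s' * x.2 + t' * y.2 = s * x.2 + t * y.2 := by
        have := congrArg Prod.snd e
        simpa [Prod.snd_add, Prod.smul_snd, smul_eq_mul] using this
      have hss : s' = s := by
        have hm : (s' - s) * (x.1 * y.2 - x.2 * y.1) = 0 := by
          linear_combination y.2 * e1 - y.1 * e2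
        rcases mul_eq_zero.1 hm with h | h
        · linarith [sub_eq_zero.1 h]
        · exact absurd h hd2
      have htt : t' = t := by
        have hm : (t' - t) * (x.1 * y.2 - x.2 * y.1) = 0 := by
          linear_combination x.1 * e2 - x.2 * e1
        rcases mul_eq_zero.1 hm with h | h
        · linarith [sub_eq_zero.1 h]
        · exact absurd h hd2
      exact ⟨hss ▸ hs', htt ▸ ht'⟩
    · rintro ⟨h1', h2'⟩; exact ⟨s, t, h1', h2', hveq⟩
  rw [if_congr hcone rfl rfl, hA, hB]
  rcases lt_or_gt_of_ne hs0 with hs | hs <;> rcases lt_or_gt_of_ne ht0 with ht | ht <;>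
    rcases lt_or_gt_of_ne hd with hD | hD
  · rw [if_neg (fun h => absurd h.1 (not_le.2 hs)), sgn'_pos (mul_pos_of_neg_of_neg ht hD),
      sgn'_neg (by nlinarith [mul_pos_of_neg_of_neg hs hD] : -(s * det2 x y) < 0),
      abs_of_neg hD]; ring
  · rw [if_neg (fun h => absurd h.1 (not_le.2 hs)), sgn'_neg (mul_neg_of_neg_of_pos ht hD),
      sgn'_pos (by nlinarith [mul_neg_of_neg_of_pos hs hD] : 0 < -(s * det2 x y)),
      abs_of_pos hD]; ring
  · rw [if_neg (fun h => absurd h.1 (not_le.2 hs)), sgn'_neg (mul_neg_of_pos_of_neg ht hD),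
      sgn'_neg (by nlinarith [mul_pos_of_neg_of_neg hs hD] : -(s * det2 x y) < 0),
      abs_of_neg hD]; ring
  · rw [if_neg (fun h => absurd h.1 (not_le.2 hs)), sgn'_pos (mul_pos ht hD),
      sgn'_pos (by nlinarith [mul_neg_of_neg_of_pos hs hD] : 0 < -(s * det2 x y)),
      abs_of_pos hD]; ring
  · rw [if_neg (fun h => absurd h.2 (not_le.2 ht)), sgn'_pos (mul_pos_of_neg_of_neg ht hD),
      sgn'_pos (by nlinarith [mul_neg_of_pos_of_neg hs hD] : 0 < -(s * det2 x y)),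
      abs_of_neg hD]; ring
  · rw [if_neg (fun h => absurd h.2 (not_le.2 ht)), sgn'_neg (mul_neg_of_neg_of_pos ht hD),
      sgn'_neg (by nlinarith [mul_pos hs hD] : -(s * det2 x y) < 0),
      abs_of_pos hD]; ring
  · rw [if_pos ⟨hs.le, ht.le⟩, sgn'_neg (mul_neg_of_pos_of_neg ht hD),
      sgn'_pos (by nlinarith [mul_neg_of_pos_of_neg hs hD] : 0 < -(s * det2 x y)),
      abs_of_neg hD]; ring
  · rw [if_pos ⟨hs.le, ht.le⟩, sgn'_pos (mul_pos ht hD),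
      sgn'_neg (by nlinarith [mul_pos hs hD] : -(s * det2 x y) < 0),
      abs_of_pos hD]; ring
lemma key (x y v v' : ℝ × ℝ)
    (hxv : ∀ t : ℝ, v ≠ t • x) (hxv' : ∀ t : ℝ, v' ≠ t • x)
    (hyv : ∀ t : ℝ, v ≠ t • y) (hyv' : ∀ t : ℝ, v' ≠ t • y) :
    (sgn' (det2 x v) * sgn' (det2 y v) - sgn' (det2 x v') * sgn' (det2 y v')) * |det2 x y|
      = 2 * sgn' (det2 v v') *
        ((if sgn' (det2 x v) = sgn' (det2 x v') then (0:ℝ) else 1)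
          - (if sgn' (det2 y v) = sgn' (det2 y v') then (0:ℝ) else 1)) * det2 x y := by
  by_cases hd : det2 x y = 0
  · rw [hd]; simp
  have hx0 : x ≠ 0 := fun h => hd (by rw [h, det2_zero_left])
  have hy0 : y ≠ 0 := fun h => hd (by rw [h, det2_zero_right])
  have hA : det2 x v ≠ 0 := det2_ne_zero hx0 hxv
  have hA' : det2 x v' ≠ 0 := det2_ne_zero hx0 hxv'
  have hB : det2 y v ≠ 0 := det2_ne_zero hy0 hyv
  have hB' : det2 y v' ≠ 0 := det2_ne_zero hy0 hyv'
  by_cases h1 : sgn' (det2 x v) = sgn' (det2 x v') <;>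
    by_cases h2 : sgn' (det2 y v) = sgn' (det2 y v')
  · rw [if_pos h1, if_pos h2, h1, h2]; ring
  · have hc := core (det2 x y) (det2 v v') (det2 x v) (det2 x v') (det2 y v) (det2 y v')
      (by unfold det2; ring) (mul_pos_of_sgn'_eq hA hA' h1) (mul_neg_of_sgn'_ne hB hB' h2)
    have h2' := sgn'_of_ne h2
    rw [if_pos h1, if_neg h2]
    rw [h1, h2'] at hc ⊢
    linear_combination (2:ℝ) * hc
  · have hc := core (det2 y x) (det2 v v') (det2 y v) (det2 y v') (det2 x v) (det2 x v')
      (by unfold det2; ring) (mul_pos_of_sgn'_eq hB hB' h2) (mul_neg_of_sgn'_ne hA hA' h1)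
    have h1' := sgn'_of_ne h1
    rw [det2_swap x y] at hc
    rw [if_neg h1, if_pos h2]
    rw [h1', h2] at hc ⊢
    rw [abs_neg] at hc
    linear_combination (2:ℝ) * hc
  · rw [if_neg h1, if_neg h2, sgn'_of_ne h1, sgn'_of_ne h2]; ring
def wAux (v v' x : ℝ × ℝ) : ℝ :=
  (sgn' (det2 x v) - sgn' (det2 x v')) -
    2 * sgn' (det2 v v') * (if sgn' (det2 x v) = sgn' (det2 x v') then 0 else 1)

lemma pair_diff (x y v v' : ℝ × ℝ)
    (hxv : ∀ t : ℝ, v ≠ t • x) (hyv : ∀ t : ℝ, v ≠ t • y)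
    (hxv' : ∀ t : ℝ, v' ≠ t • x) (hyv' : ∀ t : ℝ, v' ≠ t • y) :
    (if inCone x y v then |det2 x y| else 0) - (if inCone x y v' then |det2 x y| else 0)
      = (1/4) * ((wAux v v' x - wAux v v' y) * det2 x y) := by
  rw [cone_formula x y v hxv hyv, cone_formula x y v' hxv' hyv']
  have K := key x y v v' hxv hxv' hyv hyv'
  simp only [wAux]
  linear_combination (-(1/4) : ℝ) * K

lemma det2_sum_right {α : Type*} (s : Finset α) (x : ℝ × ℝ) (f : α → ℝ × ℝ) :
    det2 x (∑ i ∈ s, f i) = ∑ i ∈ s, det2 x (f i) := by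
  simp only [det2, Prod.fst_sum, Prod.snd_sum, Finset.mul_sum]
  rw [← Finset.sum_sub_distrib]

lemma det2_sum_left {α : Type*} (s : Finset α) (y : ℝ × ℝ) (f : α → ℝ × ℝ) :
    det2 (∑ i ∈ s, f i) y = ∑ i ∈ s, det2 (f i) y := by
  simp only [det2, Prod.fst_sum, Prod.snd_sum, Finset.sum_mul]
  rw [← Finset.sum_sub_distrib]

lemma sum_pairs_zero {n : ℕ} (f : Fin n → ℝ × ℝ) (h0 : ∑ i, f i = 0) (w : Fin n → ℝ) :
    ∑ p : Fin n × Fin n, (if p.1 < p.2 then (w p.1 - w p.2) * det2 (f p.1) (f p.2) else 0)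
      = 0 := by
  set g : Fin n × Fin n → ℝ := fun p => (w p.1 - w p.2) * det2 (f p.1) (f p.2) with hg
  have htot : ∑ p : Fin n × Fin n, g p = 0 := by
    rw [Fintype.sum_prod_type]
    have hrow : ∀ i, ∑ j, g (i, j)
        = w i * det2 (f i) (∑ j, f j) - ∑ j, w j * det2 (f i) (f j) := by
      intro i
      rw [det2_sum_right, Finset.mul_sum, ← Finset.sum_sub_distrib]
      exact Finset.sum_congr rfl fun j _ => by simp only [hg]; ring
    simp only [hrow, h0, det2_zero_right, mul_zero, zero_sub]
    rw [Finset.sum_neg_distrib, neg_eq_zero, Finset.sum_comm]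
    have hcol : ∀ j, ∑ i, w j * det2 (f i) (f j) = w j * det2 (∑ i, f i) (f j) := by
      intro j; rw [det2_sum_left, Finset.mul_sum]
    simp only [hcol, h0, det2_zero_left, mul_zero, Finset.sum_const_zero]
  have hswap : ∑ p : Fin n × Fin n, (if p.2 < p.1 then g p else 0)
      = ∑ p : Fin n × Fin n, (if p.1 < p.2 then g p else 0) := by
    apply Fintype.sum_equiv (Equiv.prodComm (Fin n) (Fin n))
    intro p
    by_cases h : p.2 < p.1
    · rw [if_pos h, if_pos (by simpa using h)]
      simp only [hg, Equiv.prodComm_apply, Prod.fst_swap, Prod.snd_swap]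
      rw [det2_swap (f p.1) (f p.2)]; ring
    · rw [if_neg h, if_neg (by simpa using h)]
  have hS : (∑ p : Fin n × Fin n, (if p.1 < p.2 then g p else 0))
      + (∑ p : Fin n × Fin n, (if p.2 < p.1 then g p else 0)) = ∑ p : Fin n × Fin n, g p := by
    rw [← Finset.sum_add_distrib]
    apply Finset.sum_congr rfl
    intro p _
    rcases lt_trichotomy p.1 p.2 with h | h | h
    · rw [if_pos h, if_neg (lt_asymm h), add_zero]
    · rw [if_neg (by rw [h]; exact lt_irrefl _), if_neg (by rw [h]; exact lt_irrefl _), add_zero]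
      simp only [hg, h, sub_self, zero_mul]
    · rw [if_neg (lt_asymm h), if_pos h, zero_add]
  rw [hswap, htot] at hS
  linarith

end DSumInv

open DSumInv in
/-- The sum `d_{B,v}` is independent of the choice of the generic vector `v`. -/
theorem dSum_independent (N : ℕ) (b : Fin (N + 1) → ℤ × ℤ)
    (hsum : ∑ i, b i = 0)
    (hspan : Submodule.span ℝ (Set.range fun i => toR (b i)) = ⊤)
    (v v' : ℝ × ℝ)
    (hv : ∀ i, ∀ t : ℝ, v ≠ t • toR (b i))
    (hv' : ∀ i, ∀ t : ℝ, v' ≠ t • toR (b i)) :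
    dSum N b v = dSum N b v' := by
  have hsumR : ∑ i, toR (b i) = (0 : ℝ × ℝ) := by
    have : ∀ i, toR (b i)
        = (AddMonoidHom.prodMap (Int.castAddHom ℝ) (Int.castAddHom ℝ)) (b i) := fun i => rfl
    simp only [this]
    rw [← map_sum, hsum, map_zero]
  have step : ∀ p : Fin (N + 1) × Fin (N + 1),
      ((if p.1 < p.2 ∧ inCone (toR (b p.1)) (toR (b p.2)) v
          then |det2 (toR (b p.1)) (toR (b p.2))| else 0)
        - (if p.1 < p.2 ∧ inCone (toR (b p.1)) (toR (b p.2)) v'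
          then |det2 (toR (b p.1)) (toR (b p.2))| else 0))
      = if p.1 < p.2 then
          (1/4) * (((fun i => wAux v v' (toR (b i))) p.1 - (fun i => wAux v v' (toR (b i))) p.2)
            * det2 (toR (b p.1)) (toR (b p.2))) else 0 := by
    intro p
    by_cases hp : p.1 < p.2
    · rw [if_pos hp, if_congr (and_iff_right hp) rfl rfl, if_congr (and_iff_right hp) rfl rfl]
      exact pair_diff _ _ _ _ (hv p.1) (hv p.2) (hv' p.1) (hv' p.2)
    · rw [if_neg hp, if_neg (fun h => hp h.1), if_neg (fun h => hp h.1)]; ring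
  have main : dSum N b v - dSum N b v' = 0 := by
    unfold dSum
    rw [← Finset.sum_sub_distrib, Finset.sum_congr rfl fun p _ => step p]
    have split4 : ∀ p : Fin (N + 1) × Fin (N + 1),
        (if p.1 < p.2 then
          (1/4) * (((fun i => wAux v v' (toR (b i))) p.1 - (fun i => wAux v v' (toR (b i))) p.2)
            * det2 (toR (b p.1)) (toR (b p.2))) else 0)
        = (1/4) * (if p.1 < p.2 then
            (((fun i => wAux v v' (toR (b i))) p.1 - (fun i => wAux v v' (toR (b i))) p.2)
              * det2 ((fun i => toR (b i)) p.1) ((fun i => toR (b i)) p.2)) else 0) := by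
      intro p; split <;> ring
    rw [Finset.sum_congr rfl fun p _ => split4 p, ← Finset.mul_sum,
      sum_pairs_zero (fun i => toR (b i)) hsumR (fun i => wAux v v' (toR (b i))), mul_zero]
  linarith
end
end

section
/- Let B = {b_1,...,b_{N+1}} be vectors in Z^2 with sum zero, and let w be a vector such that ⟨b_i, w⟩ ≠ 0 for all i with b_i ≠ 0, and let w⊥ be a nonzero vector orthogonal to w. Suppose the rays R·w⊥, R·b_1, ..., R·b_{N+1} occur in weak clockwise cyclic order with R·w⊥ distinct from the rest. Then the sum of det(b_i, b_j) over pairs i < j with ⟨b_i, w⟩ > 0 > ⟨b_j, w⟩ equals the sum of |det(b_i, b_j)| over pairs i < j with w⊥ in the cone generated by b_i and b_j. -/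
open scoped Classical

noncomputable section

def dot (x y : ℝ × ℝ) : ℝ := x.1 * y.1 + x.2 * y.2

/-- Clockwise rotation of the plane by angle `θ`. -/
def rotCW (θ : ℝ) (u : ℝ × ℝ) : ℝ × ℝ :=
  (Real.cos θ * u.1 + Real.sin θ * u.2, -Real.sin θ * u.1 + Real.cos θ * u.2)

lemma det2_self (x : ℝ × ℝ) : det2 x x = 0 := by simp [det2, mul_comm]
lemma det2_sum_left {ι : Type*} (s : Finset ι) (f : ι → ℝ × ℝ) (y : ℝ × ℝ) :
    det2 (∑ i ∈ s, f i) y = ∑ i ∈ s, det2 (f i) y := by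
  simp [det2, Prod.fst_sum, Prod.snd_sum, Finset.sum_mul, Finset.sum_sub_distrib]
lemma det2_sum_right {ι : Type*} (s : Finset ι) (f : ι → ℝ × ℝ) (x : ℝ × ℝ) :
    det2 x (∑ i ∈ s, f i) = ∑ i ∈ s, det2 x (f i) := by
  simp [det2, Prod.fst_sum, Prod.snd_sum, Finset.mul_sum, Finset.sum_sub_distrib]

lemma pos_mul_iff {a k : ℝ} (hk : 0 < k) : 0 < a * k ↔ 0 < a := by
  constructor <;> intro h <;> nlinarith
lemma neg_mul_iff {a k : ℝ} (hk : 0 < k) : a * k < 0 ↔ a < 0 := by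
  constructor <;> intro h <;> nlinarith
lemma pos_mul_iff' {a k : ℝ} (hk : k < 0) : 0 < a * k ↔ a < 0 := by
  constructor <;> intro h <;> nlinarith
lemma neg_mul_iff' {a k : ℝ} (hk : k < 0) : a * k < 0 ↔ 0 < a := by
  constructor <;> intro h <;> nlinarith

lemma inCone_iff (x y v : ℝ × ℝ) (h : det2 x y ≠ 0) :
    inCone x y v ↔ 0 ≤ det2 v y * det2 x y ∧ 0 ≤ det2 x v * det2 x y := by
  constructor
  · rintro ⟨s, t, hs, ht, rfl⟩
    constructor
    · have e : det2 (s • x + t • y) y * det2 x y = s * (det2 x y)^2 := by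
        simp [det2, Prod.fst_add, Prod.snd_add, Prod.smul_fst, Prod.smul_snd, smul_eq_mul]; ring
      rw [e]; positivity
    · have e : det2 x (s • x + t • y) * det2 x y = t * (det2 x y)^2 := by
        simp [det2, Prod.fst_add, Prod.snd_add, Prod.smul_fst, Prod.smul_snd, smul_eq_mul]; ring
      rw [e]; positivity
  · rintro ⟨h1, h2⟩
    refine ⟨det2 v y * det2 x y / (det2 x y)^2, det2 x v * det2 x y / (det2 x y)^2,
      div_nonneg h1 (sq_nonneg _), div_nonneg h2 (sq_nonneg _), ?_⟩
    have key1 : det2 x y * v.1 = det2 v y * x.1 + det2 x v * y.1 := by simp [det2]; ring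
    have key2 : det2 x y * v.2 = det2 v y * x.2 + det2 x v * y.2 := by simp [det2]; ring
    apply Prod.ext
    · simp only [Prod.fst_add, Prod.smul_fst, smul_eq_mul]
      field_simp
      linear_combination key1
    · simp only [Prod.snd_add, Prod.smul_snd, smul_eq_mul]
      field_simp
      linear_combination key2

lemma sum_pairs_swap (n : ℕ) (c : Fin n → ℝ × ℝ) (P Q : Fin n → Prop)
    (h0 : (∑ i, if P i then c i else 0) + (∑ i, if Q i then c i else 0) = 0) :
    (∑ p : Fin n × Fin n, if p.1 < p.2 ∧ P p.1 ∧ Q p.2 then det2 (c p.1) (c p.2) else 0) =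
    (∑ p : Fin n × Fin n, if p.1 < p.2 ∧ Q p.1 ∧ P p.2 then det2 (c p.1) (c p.2) else 0) := by
  have hA : (∑ p : Fin n × Fin n, if P p.1 ∧ Q p.2 then det2 (c p.1) (c p.2) else 0) = 0 := by
    rw [Fintype.sum_prod_type]
    have step : ∀ i : Fin n, (∑ j, if P i ∧ Q j then det2 (c i) (c j) else 0)
        = det2 (if P i then c i else 0) (∑ j, if Q j then c j else 0) := by
      intro i
      rw [det2_sum_right]
      apply Finset.sum_congr rfl
      intro j _
      by_cases hp : P i <;> by_cases hq : Q j <;> simp [hp, hq, det2]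
    rw [Finset.sum_congr rfl (fun i _ => step i), ← det2_sum_left]
    have hT : (∑ i, if Q i then c i else 0) = -(∑ i, if P i then c i else 0) := by
      rw [eq_neg_iff_add_eq_zero, add_comm]; exact h0
    rw [hT]
    simp [det2]
    ring
  have hsplit : ∀ p : Fin n × Fin n,
      (if P p.1 ∧ Q p.2 then det2 (c p.1) (c p.2) else 0)
      = (if p.1 < p.2 ∧ P p.1 ∧ Q p.2 then det2 (c p.1) (c p.2) else 0)
      + (if p.2 < p.1 ∧ P p.1 ∧ Q p.2 then det2 (c p.1) (c p.2) else 0) := by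
    intro p
    rcases lt_trichotomy p.1 p.2 with h | h | h
    · simp [h, h.asymm]
    · simp [h, lt_irrefl, det2_self]
    · simp [h, h.asymm]
  rw [Finset.sum_congr rfl (fun p _ => hsplit p), Finset.sum_add_distrib] at hA
  have hgt : (∑ p : Fin n × Fin n, if p.2 < p.1 ∧ P p.1 ∧ Q p.2 then det2 (c p.1) (c p.2) else 0)
      = -(∑ p : Fin n × Fin n, if p.1 < p.2 ∧ Q p.1 ∧ P p.2 then det2 (c p.1) (c p.2) else 0) := by
    rw [← Finset.sum_neg_distrib]
    apply Fintype.sum_equiv (Equiv.prodComm _ _)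
    intro p
    rcases p with ⟨a, bb⟩
    simp only [Equiv.prodComm_apply, Prod.swap_prod_mk]
    by_cases h : bb < a ∧ P a ∧ Q bb
    · rw [if_pos h]; simp only [show bb < a ∧ Q bb ∧ P a from ⟨h.1, h.2.2, h.2.1⟩, if_true]
      simp [det2]; ring
    · rw [if_neg h]; simp only [show ¬ (bb < a ∧ Q bb ∧ P a) from (fun h' => h ⟨h'.1, h'.2.2, h'.2.1⟩), if_false]
      simp
  rw [hgt] at hA
  linarith


/-- If the lines `ℝ·w⊥, ℝ·b_1, …, ℝ·b_{N+1}` occur in weak clockwise cyclic order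
(with `ℝ·w⊥` distinct from the rest), then the sum of `det(b_i,b_j)` over pairs `i < j`
with `⟨b_i,w⟩ > 0 > ⟨b_j,w⟩` equals the sum of `|det(b_i,b_j)|` over pairs `i < j`
whose cone contains `w⊥`. -/
theorem det_sum_eq_cone_sum (N : ℕ) (b : Fin (N + 1) → ℤ × ℤ)
    (hsum : ∑ i, b i = 0)
    (hspan : Submodule.span ℝ (Set.range fun i => toR (b i)) = ⊤)
    (w wp : ℝ × ℝ) (hw : w ≠ 0) (hwp : wp ≠ 0) (horth : dot wp w = 0)
    (hwb : ∀ i, toR (b i) ≠ 0 → dot (toR (b i)) w ≠ 0)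
    (θ : Fin (N + 1) → ℝ) (hmono : Monotone θ)
    (hθ : ∀ i, 0 < θ i ∧ θ i < Real.pi)
    (hline : ∀ i, ∃ t : ℝ, toR (b i) = t • rotCW (θ i) wp) :
    (∑ p : Fin (N + 1) × Fin (N + 1),
      if p.1 < p.2 ∧ 0 < dot (toR (b p.1)) w ∧ dot (toR (b p.2)) w < 0
      then det2 (toR (b p.1)) (toR (b p.2)) else 0) =
    (∑ p : Fin (N + 1) × Fin (N + 1),
      if p.1 < p.2 ∧ inCone (toR (b p.1)) (toR (b p.2)) wp
      then |det2 (toR (b p.1)) (toR (b p.2))| else 0) := by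
  choose t ht using hline
  have hwp1 : wp.1 ≠ 0 ∨ wp.2 ≠ 0 := by
    by_contra h
    push_neg at h
    exact hwp (Prod.ext h.1 h.2)
  set r : ℝ := wp.1 ^ 2 + wp.2 ^ 2 with hrdef
  have hr : 0 < r := by rcases hwp1 with h | h <;> positivity
  set lam : ℝ := (w.1 * wp.2 - w.2 * wp.1) / r with hlamdef
  have h0 : wp.1 * w.1 + wp.2 * w.2 = 0 := horth
  have hweq : w = (lam * wp.2, -(lam * wp.1)) := by
    have e1 : lam * wp.2 = w.1 := by
      rw [hlamdef, div_mul_eq_mul_div, div_eq_iff hr.ne', hrdef]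
      linear_combination (-wp.1) * h0
    have e2 : -(lam * wp.1) = w.2 := by
      rw [hlamdef, div_mul_eq_mul_div, ← neg_div, div_eq_iff hr.ne', hrdef]
      linear_combination (-wp.2) * h0
    exact (Prod.ext e1.symm e2.symm)
  have hlam : lam ≠ 0 := by
    intro h
    apply hw
    rw [hweq, h]
    norm_num
  have hsin : ∀ i, 0 < Real.sin (θ i) := fun i =>
    Real.sin_pos_of_pos_of_lt_pi (hθ i).1 (hθ i).2
  have hdot : ∀ i, dot (toR (b i)) w = t i * (lam * Real.sin (θ i) * r) := by
    intro i
    rw [ht i, hweq, hrdef]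
    simp only [dot, rotCW, Prod.smul_fst, Prod.smul_snd, smul_eq_mul]
    ring
  have hdet : ∀ i j, det2 (toR (b i)) (toR (b j)) = t i * t j * (Real.sin (θ i - θ j) * r) := by
    intro i j
    rw [ht i, ht j, hrdef]
    simp only [det2, rotCW, Prod.smul_fst, Prod.smul_snd, smul_eq_mul, Real.sin_sub]
    ring
  have hdwp : ∀ j, det2 wp (toR (b j)) = t j * (-Real.sin (θ j) * r) := by
    intro j
    rw [ht j, hrdef]
    simp only [det2, rotCW, Prod.smul_fst, Prod.smul_snd, smul_eq_mul]
    ring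
  have hwpd : ∀ i, det2 (toR (b i)) wp = t i * (Real.sin (θ i) * r) := by
    intro i
    rw [ht i, hrdef]
    simp only [det2, rotCW, Prod.smul_fst, Prod.smul_snd, smul_eq_mul]
    ring
  have hsum' : ∑ i, toR (b i) = 0 := by
    have h1 := congrArg Prod.fst hsum
    have h2 := congrArg Prod.snd hsum
    simp only [Prod.fst_sum, Prod.snd_sum, Prod.fst_zero, Prod.snd_zero] at h1 h2
    apply Prod.ext <;>
      simp only [Prod.fst_sum, Prod.snd_sum, toR, Prod.fst_zero, Prod.snd_zero]
    · exact_mod_cast congrArg (fun z : ℤ => (z : ℝ)) h1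
    · exact_mod_cast congrArg (fun z : ℤ => (z : ℝ)) h2
  -- key middle quantity
  have partA : (∑ p : Fin (N + 1) × Fin (N + 1),
      if p.1 < p.2 ∧ inCone (toR (b p.1)) (toR (b p.2)) wp
      then |det2 (toR (b p.1)) (toR (b p.2))| else 0) =
      (∑ p : Fin (N + 1) × Fin (N + 1),
      if p.1 < p.2 ∧ 0 < t p.1 ∧ t p.2 < 0
      then det2 (toR (b p.1)) (toR (b p.2)) else 0) := by
    apply Finset.sum_congr rfl
    rintro ⟨i, j⟩ -
    dsimp only
    by_cases hij : i < j
    swap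
    · simp [hij]
    by_cases hD : det2 (toR (b i)) (toR (b j)) = 0
    · simp [hD]
    have hti : t i ≠ 0 := by
      intro h; apply hD; rw [hdet i j, h]; ring
    have htj : t j ≠ 0 := by
      intro h; apply hD; rw [hdet i j, h]; ring
    have hΔne : Real.sin (θ i - θ j) ≠ 0 := by
      intro h; apply hD; rw [hdet i j, h]; ring
    have hΔ : Real.sin (θ i - θ j) < 0 := by
      rcases eq_or_lt_of_le (hmono hij.le) with h | h
      · exfalso; apply hΔne; rw [h, sub_self, Real.sin_zero]
      · have hpos : 0 < Real.sin (θ j - θ i) :=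
          Real.sin_pos_of_pos_of_lt_pi (by linarith) (by linarith [(hθ i).1, (hθ j).2])
        rw [← neg_sub, Real.sin_neg]
        linarith
    have hiff : inCone (toR (b i)) (toR (b j)) wp ↔ (0 < t i ∧ t j < 0) := by
      rw [inCone_iff _ _ _ hD]
      have e1 : det2 wp (toR (b j)) * det2 (toR (b i)) (toR (b j))
          = t i * (t j ^ 2 * (Real.sin (θ j) * (-Real.sin (θ i - θ j))) * r ^ 2) := by
        rw [hdwp j, hdet i j]; ring
      have e2 : det2 (toR (b i)) wp * det2 (toR (b i)) (toR (b j))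
          = -t j * (t i ^ 2 * (Real.sin (θ i) * (-Real.sin (θ i - θ j))) * r ^ 2) := by
        rw [hwpd i, hdet i j]; ring
      have hC1 : 0 < t j ^ 2 * (Real.sin (θ j) * (-Real.sin (θ i - θ j))) * r ^ 2 := by
        have : 0 < t j ^ 2 := lt_of_le_of_ne (sq_nonneg _) (Ne.symm (pow_ne_zero 2 htj))
        have h2 : 0 < Real.sin (θ j) * (-Real.sin (θ i - θ j)) :=
          mul_pos (hsin j) (by linarith)
        positivity
      have hC2 : 0 < t i ^ 2 * (Real.sin (θ i) * (-Real.sin (θ i - θ j))) * r ^ 2 := by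
        have : 0 < t i ^ 2 := lt_of_le_of_ne (sq_nonneg _) (Ne.symm (pow_ne_zero 2 hti))
        have h2 : 0 < Real.sin (θ i) * (-Real.sin (θ i - θ j)) :=
          mul_pos (hsin i) (by linarith)
        positivity
      rw [e1, e2]
      constructor
      · rintro ⟨ha, hb⟩
        have h1 : 0 ≤ t i := by nlinarith [ha, hC1]
        have h2 : 0 ≤ -t j := by nlinarith [hb, hC2]
        exact ⟨lt_of_le_of_ne h1 (Ne.symm hti), by
          have := lt_of_le_of_ne h2 (by simpa using (htj : t j ≠ 0) ∘ fun hh => by linarith)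
          linarith⟩
      · rintro ⟨ha, hb⟩
        constructor
        · exact mul_nonneg ha.le hC1.le
        · exact mul_nonneg (by linarith) hC2.le
    by_cases hc : 0 < t i ∧ t j < 0
    · rw [if_pos ⟨hij, hiff.mpr hc⟩, if_pos ⟨hij, hc⟩]
      have hDpos : 0 < det2 (toR (b i)) (toR (b j)) := by
        rw [hdet i j]
        have := mul_pos (mul_pos hc.1 (neg_pos.2 hc.2)) (mul_pos (neg_pos.2 hΔ) hr)
        nlinarith [this]
      exact abs_of_pos hDpos
    · rw [if_neg (fun h' => hc (hiff.mp h'.2)), if_neg (fun h' => hc h'.2)]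
  rw [partA]
  rcases hlam.lt_or_gt with hneg | hpos
  · -- lam < 0 : dot sign is opposite of t sign
    have hcond : ∀ i, (0 < dot (toR (b i)) w ↔ t i < 0) ∧ (dot (toR (b i)) w < 0 ↔ 0 < t i) := by
      intro i
      have hk : lam * Real.sin (θ i) * r < 0 := by
        have := mul_pos (hsin i) hr
        nlinarith
      rw [hdot i]
      exact ⟨pos_mul_iff' hk, neg_mul_iff' hk⟩
    have step1 : (∑ p : Fin (N + 1) × Fin (N + 1),
        if p.1 < p.2 ∧ 0 < dot (toR (b p.1)) w ∧ dot (toR (b p.2)) w < 0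
        then det2 (toR (b p.1)) (toR (b p.2)) else 0) =
        (∑ p : Fin (N + 1) × Fin (N + 1),
        if p.1 < p.2 ∧ t p.1 < 0 ∧ 0 < t p.2
        then det2 (toR (b p.1)) (toR (b p.2)) else 0) := by
      apply Finset.sum_congr rfl
      rintro ⟨i, j⟩ -
      dsimp only
      rw [if_congr (and_congr Iff.rfl (and_congr ((hcond i).1) ((hcond j).2))) rfl rfl]
    rw [step1]
    refine sum_pairs_swap _ (fun i => toR (b i)) (fun i => t i < 0) (fun i => 0 < t i) ?_
    rw [← Finset.sum_add_distrib]
    have : ∀ i : Fin (N + 1),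
        ((if t i < 0 then toR (b i) else 0) + (if 0 < t i then toR (b i) else 0)) = toR (b i) := by
      intro i
      rcases lt_trichotomy (t i) 0 with h | h | h
      · simp [h, h.asymm, not_lt_of_gt h]
      · have hz : toR (b i) = 0 := by rw [ht i, h, zero_smul]
        simp [h, hz]
      · simp [h, h.asymm, not_lt_of_gt h]
    rw [Finset.sum_congr rfl (fun i _ => this i)]
    exact hsum'
  · -- lam > 0 : dot sign equals t sign
    apply Finset.sum_congr rfl
    rintro ⟨i, j⟩ -
    dsimp only
    have hki : 0 < lam * Real.sin (θ i) * r := mul_pos (mul_pos hpos (hsin i)) hr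
    have hkj : 0 < lam * Real.sin (θ j) * r := mul_pos (mul_pos hpos (hsin j)) hr
    rw [hdot i, hdot j,
      if_congr (and_congr Iff.rfl (and_congr (pos_mul_iff hki) (neg_mul_iff hkj))) rfl rfl]
end
end
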